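/- Let A be a discrete valuation ring with uniformizer π and fraction field K, and let 0 → V' → V → V'' → 0 be an exact sequence of finite-dimensional K-vector spaces with compatible endomorphisms F', F, F''. If F' and F'' are divisible by π on suitable lattices (F'(L') ⊆ πL' and F''(L'') ⊆ πL'' for full lattices L', L''), then there exists a full lattice L in V with F(L) ⊆ πL. Equivalently: all eigenvalue valuations (slopes) of F are ≥ v(π) if the same holds for F' and F''. -/

import Mathlib

lemma aux_exists_pow_smul_mem {A : Type} [CommRing A] [IsDomain A] [IsDiscreteValuationRing A]
    (π : A) (hπ : Irreducible π)
    {K : Type} [Field K] [Algebra A K] [IsFractionRing A K]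
    {W : Type} [AddCommGroup W] [Module K W] [Module A W] [IsScalarTower A K W]
    (L : Submodule A W) (v : W) (hv : v ∈ Submodule.span K (L : Set W)) :
    ∃ n : ℕ, (π ^ n : A) • v ∈ L := by
  induction hv using Submodule.span_induction with
  | mem x hx => exact ⟨0, by simpa using hx⟩
  | zero => exact ⟨0, by simp⟩
  | add x y hx hy ihx ihy =>
      obtain ⟨n, hn⟩ := ihx
      obtain ⟨m, hm⟩ := ihy
      refine ⟨n + m, ?_⟩
      have h : (π ^ (n+m) : A) • (x + y)
          = (π^m : A) • ((π^n : A) • x) + (π^n : A) • ((π^m : A) • y) := by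
        rw [smul_add, smul_smul, smul_smul, ← pow_add, ← pow_add, add_comm m n]
      rw [h]
      exact L.add_mem (L.smul_mem _ hn) (L.smul_mem _ hm)
  | smul k x hx ih =>
      obtain ⟨n, hn⟩ := ih
      obtain ⟨⟨a, b⟩, hab⟩ := IsLocalization.surj (nonZeroDivisors A) k
      have hb0 : (b : A) ≠ 0 := nonZeroDivisors.coe_ne_zero b
      obtain ⟨m, u, hu⟩ := IsDiscreteValuationRing.eq_unit_mul_pow_irreducible hb0 hπ
      refine ⟨m + n, ?_⟩
      have hcancel : algebraMap A K (u : A) ≠ 0 :=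
        (u.isUnit.map (algebraMap A K)).ne_zero
      have hmain : algebraMap A K (π^(m+n)) * k
          = algebraMap A K (((u⁻¹ : Aˣ) * a : A) * π^n) := by
        apply mul_left_cancel₀ hcancel
        have hb' : algebraMap A K (b : A)
            = algebraMap A K (u : A) * algebraMap A K (π^m) := by rw [hu, map_mul]
        calc algebraMap A K (u:A) * (algebraMap A K (π^(m+n)) * k)
            = algebraMap A K (π^n) * (algebraMap A K (b:A) * k) := by
              rw [pow_add, map_mul, hb']; ring
          _ = algebraMap A K (π^n) * algebraMap A K a := by
              rw [mul_comm (algebraMap A K (b:A)) k, hab]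
          _ = algebraMap A K (u:A) * algebraMap A K (((u⁻¹ : Aˣ) * a : A) * π^n) := by
              simp only [← map_mul]
              congr 1
              rw [← mul_assoc ((u:A)), ← mul_assoc ((u:A)), Units.mul_inv, one_mul, mul_comm]
      have key : (π ^ (m + n) : A) • (k • x)
          = ((u⁻¹ : Aˣ) * a : A) • ((π^n : A) • x) := by
        calc (π ^ (m + n) : A) • (k • x)
            = (algebraMap A K (π^(m+n))) • (k • x) := (algebraMap_smul K _ _).symm
          _ = (algebraMap A K (π^(m+n)) * k) • x := by rw [smul_smul]
          _ = (algebraMap A K (((u⁻¹ : Aˣ) * a : A) * π^n)) • x := by rw [hmain]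
          _ = ((((u⁻¹ : Aˣ) * a : A) * π^n : A)) • x := algebraMap_smul K _ _
          _ = ((u⁻¹ : Aˣ) * a : A) • ((π^n : A) • x) := by rw [mul_smul]
      rw [key]
      exact L.smul_mem _ hn



/-- In a short exact sequence of finite-dimensional `K`-vector spaces with
compatible endomorphisms, if the outer endomorphisms are divisible by a
uniformizer `π` on full lattices, then so is the middle one on a suitable full
lattice (slopes `≥ v(π)` on the ends imply the same in the middle). -/
theorem stmt_12 (A : Type) [CommRing A] [IsDomain A] [IsDiscreteValuationRing A]
    (π : A) (hπ : Irreducible π)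
    (K : Type) [Field K] [Algebra A K] [IsFractionRing A K]
    (V' V V'' : Type)
    [AddCommGroup V'] [Module K V'] [FiniteDimensional K V']
    [Module A V'] [IsScalarTower A K V']
    [AddCommGroup V] [Module K V] [FiniteDimensional K V]
    [Module A V] [IsScalarTower A K V]
    [AddCommGroup V''] [Module K V''] [FiniteDimensional K V'']
    [Module A V''] [IsScalarTower A K V'']
    (f : V' →ₗ[K] V) (g : V →ₗ[K] V'')
    (hf : Function.Injective f) (hg : Function.Surjective g)
    (hexact : LinearMap.range f = LinearMap.ker g)
    (F' : V' →ₗ[K] V') (F : V →ₗ[K] V) (F'' : V'' →ₗ[K] V'')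
    (hcomm₁ : F ∘ₗ f = f ∘ₗ F') (hcomm₂ : g ∘ₗ F = F'' ∘ₗ g)
    (L' : Submodule A V') (hL'fg : L'.FG)
    (hL'full : Submodule.span K (L' : Set V') = ⊤)
    (hF' : ∀ x ∈ L', ∃ y ∈ L', F' x = π • y)
    (L'' : Submodule A V'') (hL''fg : L''.FG)
    (hL''full : Submodule.span K (L'' : Set V'') = ⊤)
    (hF'' : ∀ x ∈ L'', ∃ y ∈ L'', F'' x = π • y) :
    ∃ L : Submodule A V, L.FG ∧ Submodule.span K (L : Set V) = ⊤ ∧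
      ∀ x ∈ L, ∃ y ∈ L, F x = π • y := by
  classical
  have hπ0 : π ≠ 0 := hπ.ne_zero
  set c : K := algebraMap A K π with hc_def
  have hc0 : c ≠ 0 := by
    rw [hc_def]
    exact (map_ne_zero_iff (algebraMap A K) (IsFractionRing.injective A K)).mpr hπ0
  obtain ⟨s'', hs''⟩ := hL''fg
  choose lift hlift using hg
  set fA : V' →ₗ[A] V := f.restrictScalars A with hfA
  set gA : V →ₗ[A] V'' := g.restrictScalars A with hgA
  set M : Submodule A V := Submodule.span A (lift '' (s'' : Set V'')) with hM
  have hgM : M.map gA = L'' := by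
    rw [hM, Submodule.map_span, ← Set.image_comp, ← hs'']
    congr 1
    have h : ∀ y ∈ (s'' : Set V''), (gA ∘ lift) y = id y := fun y _ => hlift y
    exact (Set.image_congr h).trans (Set.image_id _)
  have key : ∀ y ∈ (s'' : Set V''), ∃ mV ∈ M, ∃ w : V', F (lift y) = π • mV + f w := by
    intro y hy
    have hyL : y ∈ L'' := hs'' ▸ Submodule.subset_span hy
    obtain ⟨z, hz, hFz⟩ := hF'' y hyL
    have hzM : z ∈ M.map gA := hgM ▸ hz
    obtain ⟨mV, hmV, hgm⟩ := hzM
    have hker : F (lift y) - π • mV ∈ LinearMap.ker g := by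
      rw [LinearMap.mem_ker, map_sub]
      have h1 : g (F (lift y)) = F'' (g (lift y)) := LinearMap.congr_fun hcomm₂ (lift y)
      have h2 : g (π • mV) = π • g mV := g.map_smul_of_tower π mV
      rw [h1, hlift y, h2]
      have : gA mV = g mV := rfl
      rw [← this, hgm, hFz, sub_self]
    rw [← hexact] at hker
    obtain ⟨w, hw⟩ := hker
    exact ⟨mV, hmV, w, by rw [hw]; abel⟩
  choose mV hmV w hw using key
  have hNy : ∀ y (hy : y ∈ (s'' : Set V'')), ∃ n, (π ^ n : A) • (w y hy) ∈ L' :=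
    fun y hy => aux_exists_pow_smul_mem π hπ L' _ (by rw [hL'full]; trivial)
  choose nn hnn using hNy
  set N : ℕ := s''.attach.sup (fun y => nn y.1 (Finset.mem_coe.mpr y.2)) with hN
  have hNw : ∀ y (hy : y ∈ (s'' : Set V'')), (π ^ N : A) • (w y hy) ∈ L' := by
    intro y hy
    have h1 : nn y hy ≤ N :=
      Finset.le_sup (f := fun y : {x // x ∈ s''} => nn y.1 (Finset.mem_coe.mpr y.2))
        (Finset.mem_attach _ ⟨y, Finset.mem_coe.mp hy⟩)
    have h2 : (π ^ N : A) • w y hy = (π ^ (N - nn y hy) : A) • ((π ^ nn y hy : A) • w y hy) := by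
      rw [smul_smul, ← pow_add, Nat.sub_add_cancel h1]
    rw [h2]
    exact L'.smul_mem _ (hnn y hy)
  set d : K := (c ^ (N + 1))⁻¹ with hd
  have hd0 : d ≠ 0 := inv_ne_zero (pow_ne_zero _ hc0)
  set e' : V' →ₗ[A] V' := (d • (LinearMap.id : V' →ₗ[K] V')).restrictScalars A with he'
  set L₁ : Submodule A V' := L'.map e' with hL₁
  set L : Submodule A V := L₁.map fA ⊔ M with hL
  have hLfg : L.FG :=
    Submodule.FG.sup ((hL'fg.map e').map fA)
      (Submodule.fg_span ((s''.finite_toSet).image lift))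
  -- span K L₁ = ⊤
  have hL1span : Submodule.span K (L₁ : Set V') = ⊤ := by
    have hset : (L₁ : Set V') = ⇑(d • (LinearMap.id : V' →ₗ[K] V')) '' (L' : Set V') := rfl
    rw [hset, Submodule.span_image, hL'full, Submodule.map_top, LinearMap.range_eq_top]
    intro v
    exact ⟨d⁻¹ • v, by simp [smul_smul, inv_mul_cancel₀ hd0, mul_inv_cancel₀ hd0]⟩
  have hrange : LinearMap.range f ≤ Submodule.span K (L : Set V) := by
    rintro x ⟨v', rfl⟩
    have hv' : v' ∈ Submodule.span K (L₁ : Set V') := by rw [hL1span]; trivial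
    have hmem : f v' ∈ Submodule.map f (Submodule.span K (L₁ : Set V')) := ⟨v', hv', rfl⟩
    rw [← Submodule.span_image] at hmem
    refine Submodule.span_mono ?_ hmem
    rintro z ⟨w₁, hw₁, rfl⟩
    exact Submodule.mem_sup_left ⟨w₁, hw₁, rfl⟩
  have hspan : Submodule.span K (L : Set V) = ⊤ := by
    rw [eq_top_iff]
    rintro v -
    have hgv : g v ∈ Submodule.span K ((s'' : Set V'')) := by
      have h3 : Submodule.span K (L'' : Set V'') = Submodule.span K (s'' : Set V'') := by
        rw [← hs'', Submodule.span_span_of_tower]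
      rw [← h3, hL''full]; trivial
    have himg : Submodule.span K ((s'' : Set V''))
        = Submodule.map g (Submodule.span K (lift '' (s'' : Set V''))) := by
      rw [← Submodule.span_image, ← Set.image_comp]
      congr 1
      have h : ∀ y ∈ (s'' : Set V''), (⇑g ∘ lift) y = id y := fun y _ => hlift y
      exact ((Set.image_congr h).trans (Set.image_id _)).symm
    rw [himg] at hgv
    obtain ⟨u, hu, hgu⟩ := hgv
    have huL : u ∈ Submodule.span K (L : Set V) := by
      refine Submodule.span_mono ?_ hu
      intro z hz
      exact Submodule.mem_sup_right (Submodule.subset_span hz)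
    have hvu : v - u ∈ LinearMap.range f := by
      rw [hexact, LinearMap.mem_ker, map_sub, hgu, sub_self]
    have hveq : v = (v - u) + u := by abel
    rw [hveq]
    exact Submodule.add_mem _ (hrange hvu) huL
  set cV : V →ₗ[A] V := (c • (LinearMap.id : V →ₗ[K] V)).restrictScalars A with hcV
  set P : Submodule A V := L.map cV with hP
  have hcds : c * (d * algebraMap A K (π ^ N)) = 1 := by
    rw [map_pow, ← hc_def, hd]
    have : c * ((c ^ (N + 1))⁻¹ * c ^ N) = (c ^ (N + 1)) * (c ^ (N + 1))⁻¹ := by ring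
    rw [this, mul_inv_cancel₀ (pow_ne_zero _ hc0)]
  have hsub : L ≤ Submodule.comap (F.restrictScalars A) P := by
    rw [hL]
    apply sup_le
    · rw [Submodule.map_le_iff_le_comap, hL₁, Submodule.map_le_iff_le_comap]
      intro wv hwv
      obtain ⟨w₂, hw₂, hFw⟩ := hF' wv hwv
      simp only [Submodule.mem_comap]
      show F (f (d • wv)) ∈ P
      have h1 : F (f (d • wv)) = c • (f (d • w₂)) := by
        have hc1 : F (f (d • wv)) = f (F' (d • wv)) := LinearMap.congr_fun hcomm₁ (d • wv)
        rw [hc1, map_smul, hFw, ← algebraMap_smul K π w₂, ← hc_def, map_smul, map_smul,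
          smul_comm d c, f.map_smul]
      rw [h1]
      exact ⟨f (d • w₂), Submodule.mem_sup_left ⟨d • w₂, ⟨w₂, hw₂, rfl⟩, rfl⟩, rfl⟩
    · rw [hM, Submodule.span_le]
      rintro x ⟨y, hy, rfl⟩
      simp only [SetLike.mem_coe, Submodule.mem_comap]
      show F (lift y) ∈ P
      rw [hw y hy]
      have hfw : f (w y hy) = c • f (d • ((π ^ N : A) • (w y hy))) := by
        have e1 : f (d • ((π ^ N : A) • (w y hy)))
            = d • ((π ^ N : A) • f (w y hy)) := by
          rw [f.map_smul, LinearMap.map_smul_of_tower]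
        rw [e1, ← algebraMap_smul K ((π : A) ^ N) (f (w y hy)), smul_smul, smul_smul,
          mul_assoc, hcds, one_smul]
      have hsum : π • (mV y hy) + f (w y hy)
          = c • ((mV y hy) + f (d • ((π ^ N : A) • (w y hy)))) := by
        rw [smul_add, hfw, ← algebraMap_smul K π (mV y hy), ← hc_def]
      rw [hsum]
      refine ⟨(mV y hy) + f (d • ((π ^ N : A) • (w y hy))), ?_, rfl⟩
      refine Submodule.add_mem _ (Submodule.mem_sup_right (hmV y hy)) ?_
      exact Submodule.mem_sup_left ⟨d • ((π ^ N : A) • (w y hy)),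
        ⟨(π ^ N : A) • (w y hy), hNw y hy, rfl⟩, rfl⟩
  refine ⟨L, hLfg, hspan, ?_⟩
  intro x hx
  have hx' := hsub hx
  rw [Submodule.mem_comap] at hx'
  obtain ⟨y, hy, hcy⟩ := hx'
  refine ⟨y, hy, ?_⟩
  rw [← algebraMap_smul K π y, ← hc_def]
  exact hcy.symm
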